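/- arXiv:0906.3234 — 4 statements merged into one kernel-verified Lean document; each statement's English description precedes it below -/
import Mathlib

section
/- For λ > 0 and the lasso objective F(x,z,λ) = |z-x|²/(2λ) + |x| with minimizer x̂ = T^soft_λ(z), the limit lim_{x→x̂} |x - x̂|² / (2(F(x,z,λ) - F(x̂,z,λ))) exists for all z with |z| ≠ λ and equals λ if |z| > λ and equals 0 if |z| < λ. -/
open Real Filter

/-- The soft-thresholding operator. -/
noncomputable def softThresh (lam z : ℝ) : ℝ :=
  if z > lam then z - lam else if z < -lam then z + lam else 0

/-- Curvature limit `σ²(z,λ)` for the lasso objective `F(x) = (z-x)²/(2λ) + |x|`: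
`lim_{x → x̂} (x - x̂)² / (2 (F x - F x̂)) = λ` if `|z| > λ` and `= 0` if `|z| < λ`. -/
theorem softThresh_curvature_limit (lam z : ℝ) (hlam : 0 < lam) (hz : |z| ≠ lam) :
    Tendsto (fun x : ℝ =>
        |x - softThresh lam z| ^ 2 /
          (2 * ((|z - x| ^ 2 / (2 * lam) + |x|) -
            (|z - softThresh lam z| ^ 2 / (2 * lam) + |softThresh lam z|))))
      (nhdsWithin (softThresh lam z) {softThresh lam z}ᶜ)
      (nhds (if lam < |z| then lam else 0)) := by
  rcases lt_or_ge lam z with h1 | h1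
  · -- z > lam, x̂ = z - lam > 0
    have hst : softThresh lam z = z - lam := by simp [softThresh, h1]
    have hxpos : 0 < z - lam := by linarith
    have habs : |z| = z := abs_of_pos (by linarith)
    rw [hst, if_pos (by rw [habs]; linarith)]
    have hev : ∀ᶠ x in nhdsWithin (z - lam) {z - lam}ᶜ,
        (fun x : ℝ => |x - (z - lam)| ^ 2 /
          (2 * ((|z - x| ^ 2 / (2 * lam) + |x|) -
            (|z - (z - lam)| ^ 2 / (2 * lam) + |z - lam|)))) x = lam := by
      filter_upwards [nhdsWithin_le_nhds (eventually_gt_nhds hxpos),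
        self_mem_nhdsWithin] with x hx hne
      have hne' : x - (z - lam) ≠ 0 := sub_ne_zero.mpr hne
      have h2 : (2 : ℝ) * ((|z - x| ^ 2 / (2 * lam) + |x|) -
            (|z - (z - lam)| ^ 2 / (2 * lam) + |z - lam|)) = (x - (z - lam)) ^ 2 / lam := by
        rw [abs_of_pos hx, abs_of_pos hxpos, show z - (z - lam) = lam by ring,
          abs_of_pos hlam, sq_abs]
        field_simp
        ring
      rw [h2, sq_abs, div_div_eq_mul_div, div_eq_iff (by positivity)]
      ring
    exact Tendsto.congr' (Filter.EventuallyEq.symm hev) tendsto_const_nhds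
  · rcases lt_or_ge z (-lam) with h2 | h2
    · -- z < -lam, x̂ = z + lam < 0
      have hst : softThresh lam z = z + lam := by
        simp [softThresh, h2, not_lt.mpr (by linarith : z ≤ lam)]
      have hxneg : z + lam < 0 := by linarith
      have habs : |z| = -z := abs_of_neg (by linarith)
      rw [hst, if_pos (by rw [habs]; linarith)]
      have hev : ∀ᶠ x in nhdsWithin (z + lam) {z + lam}ᶜ,
          (fun x : ℝ => |x - (z + lam)| ^ 2 /
            (2 * ((|z - x| ^ 2 / (2 * lam) + |x|) -
              (|z - (z + lam)| ^ 2 / (2 * lam) + |z + lam|)))) x = lam := by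
        filter_upwards [nhdsWithin_le_nhds (eventually_lt_nhds hxneg),
          self_mem_nhdsWithin] with x hx hne
        have hne' : x - (z + lam) ≠ 0 := sub_ne_zero.mpr hne
        have h2 : (2 : ℝ) * ((|z - x| ^ 2 / (2 * lam) + |x|) -
              (|z - (z + lam)| ^ 2 / (2 * lam) + |z + lam|)) = (x - (z + lam)) ^ 2 / lam := by
          rw [abs_of_neg hx, abs_of_neg hxneg, show z - (z + lam) = -lam by ring,
            abs_neg, abs_of_pos hlam, sq_abs]
          field_simp
          ring
        rw [h2, sq_abs, div_div_eq_mul_div, div_eq_iff (by positivity)]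
        ring
      exact Tendsto.congr' (Filter.EventuallyEq.symm hev) tendsto_const_nhds
    · -- |z| < lam, x̂ = 0
      have habs : |z| < lam := by
        rcases abs_cases z with ⟨h, _⟩ | ⟨h, _⟩
        · rw [h]; exact lt_of_le_of_ne h1 (by rw [← h]; exact hz)
        · rw [h]; exact lt_of_le_of_ne (by linarith) (by rw [← h]; exact hz)
      have hst : softThresh lam z = 0 := by
        simp [softThresh, not_lt.mpr h1, not_lt.mpr h2]
      rw [hst, if_neg (not_lt.mpr habs.le)]
      set D : ℝ → ℝ := fun x => 2 * ((|z - x| ^ 2 / (2 * lam) + |x|) -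
            (|z - 0| ^ 2 / (2 * lam) + |(0 : ℝ)|)) with hD
      have hDlb : ∀ x : ℝ, x ≠ 0 → 2 * |x| * (lam - |z|) / lam ≤ D x := by
        intro x hx
        have hzx : z * x ≤ |z| * |x| := by
          calc z * x ≤ |z * x| := le_abs_self _
          _ = |z| * |x| := abs_mul z x
        have hDeq : D x = (x ^ 2 - 2 * z * x) / lam + 2 * |x| := by
          rw [hD]
          simp only [sub_zero, abs_zero, sq_abs]
          field_simp
          ring
        rw [hDeq]
        have hx2 : 0 ≤ x ^ 2 / lam := by positivity
        rw [div_add' _ _ _ hlam.ne', div_le_div_iff₀ hlam hlam]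
        nlinarith [abs_nonneg x, abs_nonneg z]
      have hlz : 0 < lam - |z| := sub_pos.mpr habs
      have hDpos : ∀ x : ℝ, x ≠ 0 → 0 < D x := by
        intro x hx
        refine lt_of_lt_of_le ?_ (hDlb x hx)
        have h0 : 0 < |x| := abs_pos.mpr hx
        exact div_pos (mul_pos (by positivity) hlz) hlam
      apply squeeze_zero'
      · filter_upwards [self_mem_nhdsWithin] with x hx
        exact div_nonneg (by positivity) (hDpos x hx).le
      · filter_upwards [self_mem_nhdsWithin] with x hx
        have h0 : 0 < |x| := abs_pos.mpr hx
        have key : |x - 0| ^ 2 / D x ≤ |x| * lam / (2 * (lam - |z|)) := by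
          have hlb0 : (0:ℝ) < 2 * |x| * (lam - |z|) / lam :=
            div_pos (mul_pos (by positivity) hlz) hlam
          have hle := div_le_div_of_nonneg_left (a := |x - 0| ^ 2)
            (by positivity) hlb0 (hDlb x hx)
          refine hle.trans_eq ?_
          rw [sub_zero, sq_abs]
          rw [div_div_eq_mul_div, div_eq_div_iff (by positivity) (by positivity),
            ← sq_abs x]
          ring
        exact key
      · have : Tendsto (fun x : ℝ => |x| * lam / (2 * (lam - |z|))) (nhds 0)
            (nhds (|0| * lam / (2 * (lam - |z|)))) := by
          exact (continuous_abs.mul continuous_const).div_const _ |>.tendsto 0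
        simpa using this.mono_left nhdsWithin_le_nhds
end

section
/- For λ > 0 and the hard-thresholding objective F(x,z,λ) = |z-x|²/(2λ) + 1_{x≠0} with minimizer x̂ = T^hard_{√(2λ)}(z), the limit lim_{x→x̂} |x - x̂|² / (2(F(x,z,λ) - F(x̂,z,λ))) equals λ if |z| > √(2λ) and 0 if |z| < √(2λ). -/
open Real Filter

/-- The hard-thresholding operator. -/
noncomputable def hardThresh (t z : ℝ) : ℝ := if t < |z| then z else 0

/-- Curvature limit `σ²(z,λ)` for the hard-thresholding objective
`F(x) = (z-x)²/(2λ) + 1_{x ≠ 0}` with minimizer `x̂ = T^hard_{√(2λ)}(z)`: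
the limit equals `λ` if `|z| > √(2λ)` and `0` if `|z| < √(2λ)`. -/
theorem hardThresh_curvature_limit (lam z : ℝ) (hlam : 0 < lam)
    (hz : |z| ≠ Real.sqrt (2 * lam)) :
    Tendsto (fun x : ℝ =>
        |x - hardThresh (Real.sqrt (2 * lam)) z| ^ 2 /
          (2 * ((|z - x| ^ 2 / (2 * lam) + (if x ≠ 0 then (1 : ℝ) else 0)) -
            (|z - hardThresh (Real.sqrt (2 * lam)) z| ^ 2 / (2 * lam) +
              (if hardThresh (Real.sqrt (2 * lam)) z ≠ 0 then (1 : ℝ) else 0)))))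
      (nhdsWithin (hardThresh (Real.sqrt (2 * lam)) z)
        {hardThresh (Real.sqrt (2 * lam)) z}ᶜ)
      (nhds (if Real.sqrt (2 * lam) < |z| then lam else 0)) := by
  have hlam' : lam ≠ 0 := ne_of_gt hlam
  by_cases h : Real.sqrt (2 * lam) < |z|
  · -- minimizer is z
    have hs : 0 < Real.sqrt (2 * lam) := Real.sqrt_pos.mpr (by linarith)
    have hz0 : z ≠ 0 := by
      intro hz'
      rw [hz', abs_zero] at h; linarith
    simp only [hardThresh, if_pos h]
    have hev : ∀ᶠ x in nhdsWithin z {z}ᶜ,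
        (|x - z| ^ 2 /
          (2 * ((|z - x| ^ 2 / (2 * lam) + (if x ≠ 0 then (1 : ℝ) else 0)) -
            (|z - z| ^ 2 / (2 * lam) + (if z ≠ 0 then (1 : ℝ) else 0))))) = lam := by
      filter_upwards [self_mem_nhdsWithin,
        (eventually_ne_nhds hz0).filter_mono nhdsWithin_le_nhds] with x hx hx0
      have hxz : x ≠ z := hx
      rw [if_pos hx0, if_pos hz0, sub_self, abs_zero]
      have hne : (z - x) ≠ 0 := sub_ne_zero.mpr (Ne.symm hxz)
      have h1 : |x - z| ^ 2 = (z - x) ^ 2 := by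
        rw [abs_sub_comm, sq_abs]
      have h2 : |z - x| ^ 2 = (z - x) ^ 2 := sq_abs _
      rw [h1, h2]
      have hne2 : (z - x) ^ 2 ≠ 0 := pow_ne_zero _ hne
      field_simp
      ring
    refine Tendsto.congr' (Filter.EventuallyEq.symm hev) ?_
    exact tendsto_const_nhds
  · -- minimizer is 0
    simp only [hardThresh, if_neg h]
    have hev : ∀ᶠ x in nhdsWithin (0 : ℝ) {(0 : ℝ)}ᶜ,
        (|x - 0| ^ 2 /
          (2 * ((|z - x| ^ 2 / (2 * lam) + (if x ≠ 0 then (1 : ℝ) else 0)) -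
            (|z - 0| ^ 2 / (2 * lam) + (if (0 : ℝ) ≠ 0 then (1 : ℝ) else 0))))) =
          x ^ 2 * lam / ((z - x) ^ 2 - z ^ 2 + 2 * lam) := by
      filter_upwards [self_mem_nhdsWithin] with x hx
      have hx0 : x ≠ 0 := hx
      rw [if_pos hx0, if_neg (by simp)]
      rw [sub_zero, sub_zero, sq_abs, sq_abs, sq_abs]
      have key : 2 * ((z - x) ^ 2 / (2 * lam) + 1 - (z ^ 2 / (2 * lam) + 0)) =
          ((z - x) ^ 2 - z ^ 2 + 2 * lam) / lam := by
        field_simp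
        ring
      rw [key, div_div_eq_mul_div]
    refine Tendsto.congr' (Filter.EventuallyEq.symm hev) ?_
    have hlim : Tendsto (fun x : ℝ => x ^ 2 * lam / ((z - x) ^ 2 - z ^ 2 + 2 * lam))
        (nhds 0) (nhds 0) := by
      have h1 : Tendsto (fun x : ℝ => x ^ 2 * lam) (nhds 0) (nhds ((0:ℝ) ^ 2 * lam)) :=
        Continuous.tendsto (by continuity) 0
      have h2 : Tendsto (fun x : ℝ => (z - x) ^ 2 - z ^ 2 + 2 * lam) (nhds 0)
          (nhds ((z - (0:ℝ)) ^ 2 - z ^ 2 + 2 * lam)) :=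
        Continuous.tendsto (by continuity) 0
      have hd : ((z - (0:ℝ)) ^ 2 - z ^ 2 + 2 * lam) ≠ 0 := by
        have : (z - (0:ℝ)) ^ 2 - z ^ 2 + 2 * lam = 2 * lam := by ring
        rw [this]; positivity
      have := Tendsto.div h1 h2 hd
      simp only [zero_pow two_ne_zero, zero_mul, zero_div] at this
      exact this
    exact hlim.mono_left nhdsWithin_le_nhds
end

section
/- Fix λ > 0 and z ∈ ℝ with |z| > λ. Let F(x) = (z-x)²/(2λ) + |x|, x̂ = T^soft_λ(z), and q_u(x) = e^{-uF(x)}/∫_ℝ e^{-uF}. Then lim_{u→∞} ∫_ℝ u·(x - x̂)² q_u(x) dx = λ. -/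
open MeasureTheory Filter Real

lemma sq_mul_exp_integral {b : ℝ} (hb : 0 < b) :
    ∫ x : ℝ, x ^ 2 * Real.exp (-b * x ^ 2)
      = (2 * b)⁻¹ * ∫ x : ℝ, Real.exp (-b * x ^ 2) := by
  have hb' : (2 * b) ≠ 0 := by positivity
  have hu : ∀ x : ℝ, HasDerivAt (fun x : ℝ => x) 1 x := fun x => hasDerivAt_id x
  have hv : ∀ x : ℝ, HasDerivAt (fun x : ℝ => -(2 * b)⁻¹ * Real.exp (-b * x ^ 2))
      (x * Real.exp (-b * x ^ 2)) x := by
    intro x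
    have h1 : HasDerivAt (fun x : ℝ => -b * x ^ 2) (-b * (2 * x)) x := by
      simpa using (hasDerivAt_pow 2 x).const_mul (-b)
    have h2 := (h1.exp).const_mul (-(2 * b)⁻¹)
    refine h2.congr_deriv ?_
    field_simp
  have hint2 : Integrable (fun x : ℝ => x ^ 2 * Real.exp (-b * x ^ 2)) := by
    have := integrable_rpow_mul_exp_neg_mul_sq hb (s := 2) (by norm_num)
    have heq : (fun x : ℝ => x ^ (2:ℝ) * Real.exp (-b * x ^ 2))
        = fun x : ℝ => x ^ 2 * Real.exp (-b * x ^ 2) := by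
      funext x
      rw [show ((2:ℝ)) = ((2:ℕ) : ℝ) from by norm_num, Real.rpow_natCast]
    rwa [heq] at this
  have hint1 : Integrable (fun x : ℝ => x * Real.exp (-b * x ^ 2)) :=
    integrable_mul_exp_neg_mul_sq hb
  have hint0 : Integrable (fun x : ℝ => Real.exp (-b * x ^ 2)) :=
    integrable_exp_neg_mul_sq hb
  have key := MeasureTheory.integral_mul_deriv_eq_deriv_mul_of_integrable (fun x _ => hu x) (fun x _ => hv x)
    (by simpa [Pi.mul_def, mul_comm, mul_assoc, mul_left_comm, sq] using hint2)
    (by simpa [Pi.mul_def] using hint0.const_mul (-(2 * b)⁻¹))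
    (by simpa [Pi.mul_def, mul_comm, mul_assoc, mul_left_comm] using hint1.const_mul (-(2 * b)⁻¹))
  calc ∫ x : ℝ, x ^ 2 * Real.exp (-b * x ^ 2)
      = ∫ x : ℝ, x * (x * Real.exp (-b * x ^ 2)) := by congr 1; funext x; ring
    _ = -∫ x : ℝ, 1 * (-(2 * b)⁻¹ * Real.exp (-b * x ^ 2)) := key
    _ = (2 * b)⁻¹ * ∫ x : ℝ, Real.exp (-b * x ^ 2) := by
        have : ∀ x : ℝ, 1 * (-(2 * b)⁻¹ * Real.exp (-b * x ^ 2))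
            = -((2 * b)⁻¹ * Real.exp (-b * x ^ 2)) := fun x => by ring
        simp only [this]
        rw [MeasureTheory.integral_neg, neg_neg, MeasureTheory.integral_const_mul]

lemma subst_helper (u s a lam : ℝ) (hs : 0 < s) (φ : ℝ → ℝ) :
    ∫ x : ℝ, φ (s * (x - a)) * Real.exp (-((s * (x - a)) ^ 2 / (2 * lam) + u * (|x| - x)))
      = s⁻¹ * ∫ y : ℝ, φ y *
          Real.exp (-(y ^ 2 / (2 * lam) + u * (|a + s⁻¹ * y| - (a + s⁻¹ * y)))) := by
  set h : ℝ → ℝ := fun x =>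
    φ (s * (x - a)) * Real.exp (-((s * (x - a)) ^ 2 / (2 * lam) + u * (|x| - x))) with hh
  have e1 : ∫ x : ℝ, h x = ∫ t : ℝ, h (a + t) :=
    (MeasureTheory.integral_add_left_eq_self h a).symm
  have e2 : ∫ y : ℝ, h (a + s⁻¹ * y) = s * ∫ t : ℝ, h (a + t) := by
    have := MeasureTheory.Measure.integral_comp_mul_left (fun t => h (a + t)) s⁻¹
    simpa [abs_of_pos hs, smul_eq_mul] using this
  have e3 : ∀ y : ℝ, h (a + s⁻¹ * y)
      = φ y * Real.exp (-(y ^ 2 / (2 * lam) + u * (|a + s⁻¹ * y| - (a + s⁻¹ * y)))) := by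
    intro y
    have : s * (a + s⁻¹ * y - a) = y := by field_simp; ring
    simp only [hh, this]
  calc ∫ x : ℝ, h x = ∫ t : ℝ, h (a + t) := e1
    _ = s⁻¹ * ∫ y : ℝ, h (a + s⁻¹ * y) := by rw [e2]; field_simp
    _ = s⁻¹ * ∫ y : ℝ, φ y *
          Real.exp (-(y ^ 2 / (2 * lam) + u * (|a + s⁻¹ * y| - (a + s⁻¹ * y)))) := by
        rw [funext e3]

lemma tendsto_aux (lam a : ℝ) (hlam : 0 < lam) (ha : 0 < a) (n : ℕ) :
    Tendsto (fun u : ℝ => ∫ y : ℝ, y ^ n *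
        Real.exp (-(y ^ 2 / (2 * lam) +
          u * (|a + (Real.sqrt u)⁻¹ * y| - (a + (Real.sqrt u)⁻¹ * y)))))
      atTop (nhds (∫ y : ℝ, y ^ n * Real.exp (-(y ^ 2 / (2 * lam))))) := by
  have hb : (0:ℝ) < (2 * lam)⁻¹ := by positivity
  have hbound : Integrable (fun y : ℝ => |y| ^ n * Real.exp (-(y ^ 2 / (2 * lam)))) := by
    have h1 : Integrable (fun y : ℝ => y ^ n * Real.exp (-(2 * lam)⁻¹ * y ^ 2)) := by
      have := integrable_rpow_mul_exp_neg_mul_sq hb (s := n)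
        (by exact lt_of_lt_of_le (by norm_num) (Nat.cast_nonneg n))
      have heq : (fun x : ℝ => x ^ (n:ℝ) * Real.exp (-(2 * lam)⁻¹ * x ^ 2))
          = fun x : ℝ => x ^ n * Real.exp (-(2 * lam)⁻¹ * x ^ 2) := by
        funext x; rw [Real.rpow_natCast]
      rwa [heq] at this
    have h2 := h1.abs
    refine h2.congr ?_
    filter_upwards with y
    rw [abs_mul, abs_pow, abs_of_pos (Real.exp_pos _)]
    congr 2
    ring
  refine tendsto_integral_filter_of_dominated_convergence
    (fun y : ℝ => |y| ^ n * Real.exp (-(y ^ 2 / (2 * lam)))) ?_ ?_ hbound ?_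
  · filter_upwards with u
    apply Continuous.aestronglyMeasurable
    fun_prop
  · filter_upwards [eventually_ge_atTop (0:ℝ)] with u hu
    filter_upwards with y
    have hp : 0 ≤ |a + (Real.sqrt u)⁻¹ * y| - (a + (Real.sqrt u)⁻¹ * y) :=
      sub_nonneg.2 (le_abs_self _)
    rw [Real.norm_eq_abs, abs_mul, abs_pow, abs_of_pos (Real.exp_pos _)]
    have h0 : 0 ≤ u * (|a + (Real.sqrt u)⁻¹ * y| - (a + (Real.sqrt u)⁻¹ * y)) :=
      mul_nonneg hu hp
    have hle : Real.exp (-(y ^ 2 / (2 * lam) +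
        u * (|a + (Real.sqrt u)⁻¹ * y| - (a + (Real.sqrt u)⁻¹ * y))))
        ≤ Real.exp (-(y ^ 2 / (2 * lam))) := Real.exp_le_exp.2 (by linarith)
    exact mul_le_mul_of_nonneg_left hle (pow_nonneg (abs_nonneg y) n)
  · filter_upwards with y
    have hev : (fun u : ℝ => y ^ n * Real.exp (-(y ^ 2 / (2 * lam)))) =ᶠ[atTop]
        (fun u : ℝ => y ^ n * Real.exp (-(y ^ 2 / (2 * lam) +
          u * (|a + (Real.sqrt u)⁻¹ * y| - (a + (Real.sqrt u)⁻¹ * y))))) := by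
      filter_upwards [eventually_ge_atTop (max 1 ((y / a) ^ 2))] with u hu
      have hu1 : (1:ℝ) ≤ u := le_trans (le_max_left _ _) hu
      have hsu : 0 < Real.sqrt u := Real.sqrt_pos.2 (by linarith)
      have h1 : |y| / a ≤ Real.sqrt u := by
        have := Real.sqrt_le_sqrt (le_trans (le_max_right _ _) hu)
        rwa [Real.sqrt_sq_eq_abs, abs_div, abs_of_pos ha] at this
      have h1' : |y| ≤ a * Real.sqrt u := by
        rw [div_le_iff₀ ha] at h1; linarith
      have h3 : (Real.sqrt u)⁻¹ * |y| ≤ a := by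
        rw [inv_mul_le_iff₀ hsu, mul_comm]; exact h1'
      have h4 : -((Real.sqrt u)⁻¹ * |y|) ≤ (Real.sqrt u)⁻¹ * y := by
        have h5 := neg_abs_le y
        nlinarith [inv_nonneg.mpr hsu.le]
      have h2 : 0 ≤ a + (Real.sqrt u)⁻¹ * y := by linarith
      have hz : |a + (Real.sqrt u)⁻¹ * y| - (a + (Real.sqrt u)⁻¹ * y) = 0 := by
        rw [abs_of_nonneg h2]; ring
      rw [hz, mul_zero, add_zero]
    exact tendsto_const_nhds.congr' hev

lemma main_pos (lam z : ℝ) (hlam : 0 < lam) (hz : lam < z) :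
    Tendsto (fun u : ℝ =>
        (∫ x : ℝ, u * (x - softThresh lam z) ^ 2 *
            Real.exp (-(u * ((z - x) ^ 2 / (2 * lam) + |x|)))) /
          (∫ x : ℝ, Real.exp (-(u * ((z - x) ^ 2 / (2 * lam) + |x|)))))
      atTop (nhds lam) := by
  have hT : softThresh lam z = z - lam := if_pos hz
  rw [hT]
  have ha : 0 < z - lam := by linarith
  set a := z - lam with haa
  set c := z - lam / 2 with hcc
  set A : ℝ → ℝ := fun u => ∫ y : ℝ, y ^ 2 *
      Real.exp (-(y ^ 2 / (2 * lam) +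
        u * (|a + (Real.sqrt u)⁻¹ * y| - (a + (Real.sqrt u)⁻¹ * y)))) with hAdef
  set B : ℝ → ℝ := fun u => ∫ y : ℝ, y ^ 0 *
      Real.exp (-(y ^ 2 / (2 * lam) +
        u * (|a + (Real.sqrt u)⁻¹ * y| - (a + (Real.sqrt u)⁻¹ * y)))) with hBdef
  have key : ∀ᶠ u in atTop,
      (∫ x : ℝ, u * (x - a) ^ 2 * Real.exp (-(u * ((z - x) ^ 2 / (2 * lam) + |x|)))) /
        (∫ x : ℝ, Real.exp (-(u * ((z - x) ^ 2 / (2 * lam) + |x|))))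
      = A u / B u := by
    filter_upwards [eventually_gt_atTop (0:ℝ)] with u hu
    set s := Real.sqrt u with hsdef
    have hs : 0 < s := Real.sqrt_pos.2 hu
    have hs2 : s ^ 2 = u := Real.sq_sqrt hu.le
    have e_num : (fun x : ℝ => u * (x - a) ^ 2 *
          Real.exp (-(u * ((z - x) ^ 2 / (2 * lam) + |x|))))
        = fun x : ℝ => Real.exp (-(u * c)) * ((fun y : ℝ => y ^ 2) (s * (x - a)) *
            Real.exp (-((s * (x - a)) ^ 2 / (2 * lam) + u * (|x| - x)))) := by
      funext x
      simp only
      have hsx : (s * (x - a)) ^ 2 = u * (x - a) ^ 2 := by rw [mul_pow, hs2]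
      rw [hsx, mul_left_comm, ← Real.exp_add]
      congr 1
      rw [haa, hcc]
      field_simp
      ring
    have e_den : (fun x : ℝ => Real.exp (-(u * ((z - x) ^ 2 / (2 * lam) + |x|))))
        = fun x : ℝ => Real.exp (-(u * c)) * ((fun y : ℝ => y ^ 0) (s * (x - a)) *
            Real.exp (-((s * (x - a)) ^ 2 / (2 * lam) + u * (|x| - x)))) := by
      funext x
      simp only [pow_zero, one_mul]
      rw [← Real.exp_add]
      congr 1
      have hsx : (s * (x - a)) ^ 2 = u * (x - a) ^ 2 := by rw [mul_pow, hs2]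
      rw [hsx, haa, hcc]
      field_simp
      ring
    rw [e_num, e_den, MeasureTheory.integral_const_mul, MeasureTheory.integral_const_mul,
      subst_helper u s a lam hs (fun y : ℝ => y ^ 2),
      subst_helper u s a lam hs (fun y : ℝ => y ^ 0)]
    have hk : Real.exp (-(u * c)) * s⁻¹ ≠ 0 := by positivity
    calc Real.exp (-(u * c)) * (s⁻¹ * A u) / (Real.exp (-(u * c)) * (s⁻¹ * B u))
        = (Real.exp (-(u * c)) * s⁻¹ * A u) / (Real.exp (-(u * c)) * s⁻¹ * B u) := by
          rw [mul_assoc, mul_assoc]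
      _ = A u / B u := mul_div_mul_left _ _ hk
  have hA := tendsto_aux lam a hlam ha 2
  have hB := tendsto_aux lam a hlam ha 0
  have hBpos : 0 < ∫ y : ℝ, y ^ 0 * Real.exp (-(y ^ 2 / (2 * lam))) := by
    have heq : (fun y : ℝ => y ^ 0 * Real.exp (-(y ^ 2 / (2 * lam))))
        = fun y : ℝ => Real.exp (-(2 * lam)⁻¹ * y ^ 2) := by
      funext y; rw [pow_zero, one_mul]; congr 1; ring
    rw [heq, integral_gaussian]
    exact Real.sqrt_pos.2 (by positivity)
  have hAval : (∫ y : ℝ, y ^ 2 * Real.exp (-(y ^ 2 / (2 * lam))))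
      = lam * ∫ y : ℝ, y ^ 0 * Real.exp (-(y ^ 2 / (2 * lam))) := by
    have hb : (0:ℝ) < (2 * lam)⁻¹ := by positivity
    have heq1 : (fun y : ℝ => y ^ 2 * Real.exp (-(y ^ 2 / (2 * lam))))
        = fun y : ℝ => y ^ 2 * Real.exp (-(2 * lam)⁻¹ * y ^ 2) := by
      funext y; congr 1; ring
    have heq0 : (fun y : ℝ => y ^ 0 * Real.exp (-(y ^ 2 / (2 * lam))))
        = fun y : ℝ => Real.exp (-(2 * lam)⁻¹ * y ^ 2) := by
      funext y; rw [pow_zero, one_mul]; congr 1; ring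
    rw [heq1, heq0, sq_mul_exp_integral hb]
    congr 1
    field_simp
  have hfinal := hA.div hB hBpos.ne'
  rw [hAval, mul_div_assoc, div_self hBpos.ne', mul_one] at hfinal
  exact hfinal.congr' (key.mono fun u h => h.symm)

/-- Rescaled posterior variance of the lasso Gibbs measure in the regime
`|z| > λ`: `lim_{u→∞} ∫ u (x - x̂)² q_u(x) dx = λ` where
`q_u ∝ e^{-u F}`, `F(x) = (z-x)²/(2λ) + |x|`, `x̂ = T^soft_λ(z)`. -/
theorem lasso_gibbs_variance_above_threshold (lam z : ℝ) (hlam : 0 < lam)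
    (hz : lam < |z|) :
    Tendsto (fun u : ℝ =>
        (∫ x : ℝ, u * (x - softThresh lam z) ^ 2 *
            Real.exp (-(u * ((z - x) ^ 2 / (2 * lam) + |x|)))) /
          (∫ x : ℝ, Real.exp (-(u * ((z - x) ^ 2 / (2 * lam) + |x|)))))
      atTop (nhds lam) := by
  rcases abs_cases z with ⟨h1, h2⟩ | ⟨h1, h2⟩
  · exact main_pos lam z hlam (h1 ▸ hz)
  · -- z < 0, lam < -z
    have hz' : lam < -z := h1 ▸ hz
    have hneg : ∀ f : ℝ → ℝ, ∫ x : ℝ, f (-x) = ∫ x : ℝ, f x := by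
      intro f
      have := MeasureTheory.Measure.integral_comp_mul_left f (-1)
      simpa [neg_one_mul, inv_neg, abs_neg, abs_one] using this
    have hTz : softThresh lam z = z + lam := by
      unfold softThresh
      rw [if_neg (by linarith), if_pos (by linarith)]
    have hTz' : softThresh lam (-z) = -(z + lam) := by
      unfold softThresh
      rw [if_pos (by linarith)]
      ring
    refine (main_pos lam (-z) hlam hz').congr fun u => ?_
    congr 1
    · rw [← hneg (fun x => u * (x - softThresh lam (-z)) ^ 2 *
          Real.exp (-(u * ((-z - x) ^ 2 / (2 * lam) + |x|))))]
      congr 1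
      funext x
      rw [hTz, hTz', abs_neg]
      congr 2
      · ring
      · congr 2
        ring
    · rw [← hneg (fun x => Real.exp (-(u * ((-z - x) ^ 2 / (2 * lam) + |x|))))]
      congr 1
      funext x
      rw [abs_neg]
      congr 3
      ring
end

section
/- Fix λ > 0 and z ∈ ℝ with |z| < λ. Let F(x) = (z-x)²/(2λ) + |x| and q_u(x) = e^{-uF(x)}/∫_ℝ e^{-uF}. Then lim_{u→∞} ∫_ℝ u·x² q_u(x) dx = 0. -/
open MeasureTheory Filter Real Set

lemma integrableOn_pow_mul_exp (n : ℕ) {b : ℝ} (hb : 0 < b) :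
    IntegrableOn (fun x : ℝ => x ^ n * Real.exp (-(b * x))) (Ioi 0) := by
  have h := integrableOn_rpow_mul_exp_neg_mul_rpow (s := (n : ℝ)) (p := 1)
    (by exact_mod_cast neg_one_lt_zero.trans_le (Nat.cast_nonneg n) : (-1:ℝ) < (n:ℝ)) zero_lt_one hb
  refine h.congr_fun (fun x hx => ?_) measurableSet_Ioi
  simp only [Real.rpow_natCast, Real.rpow_one]
  ring_nf

lemma integrable_abs_pow_mul_exp (n : ℕ) {b : ℝ} (hb : 0 < b) :
    Integrable (fun x : ℝ => |x| ^ n * Real.exp (-(b * |x|))) := by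
  set f : ℝ → ℝ := fun t => t ^ n * Real.exp (-(b * t)) with hf
  have hIoi : IntegrableOn (fun x : ℝ => f |x|) (Ioi 0) := by
    refine (integrableOn_pow_mul_exp n hb).congr_fun (fun x hx => ?_) measurableSet_Ioi
    simp [f, abs_of_pos (mem_Ioi.mp hx)]
  have hIic : IntegrableOn (fun x : ℝ => f |x|) (Iic 0) := by
    rw [← Measure.map_neg_eq_self (volume : Measure ℝ)]
    have m : MeasurableEmbedding fun x : ℝ => -x := (Homeomorph.neg ℝ).measurableEmbedding
    rw [m.integrableOn_map_iff]
    simp_rw [Function.comp_def, abs_neg, neg_preimage, neg_Iic, neg_zero]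
    exact Iff.mpr integrableOn_Ici_iff_integrableOn_Ioi hIoi
  have : Integrable (fun x : ℝ => f |x|) := by
    rw [← integrableOn_univ, ← Set.Iic_union_Ioi (a := (0:ℝ))]
    exact hIic.union hIoi
  simpa [f] using this

lemma integral_Ioi_sq_mul_exp {b : ℝ} (hb : 0 < b) :
    ∫ x in Ioi (0:ℝ), x ^ 2 * Real.exp (-(b * x)) = 2 / b ^ 3 := by
  have h := Real.integral_rpow_mul_exp_neg_mul_Ioi (a := 3) (r := b) (by norm_num) hb
  have heq : ∫ x in Ioi (0:ℝ), x ^ 2 * Real.exp (-(b * x))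
      = ∫ t in Ioi (0:ℝ), t ^ ((3:ℝ) - 1) * Real.exp (-(b * t)) := by
    refine setIntegral_congr_fun measurableSet_Ioi (fun x hx => ?_)
    rw [show (3:ℝ) - 1 = ((2:ℕ):ℝ) by norm_num, Real.rpow_natCast]
  rw [heq, h]
  have h3 : Real.Gamma 3 = 2 := by
    rw [show (3:ℝ) = (2:ℕ) + 1 by norm_num, Real.Gamma_nat_eq_factorial]
    norm_num
  rw [h3, show (1/b) ^ (3:ℝ) = (1/b)^(3:ℕ) by rw [← Real.rpow_natCast]; norm_num]
  field_simp

lemma integral_abs_sq_exp {b : ℝ} (hb : 0 < b) :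
    ∫ x : ℝ, x ^ 2 * Real.exp (-(b * |x|)) = 4 / b ^ 3 := by
  have h := integral_comp_abs (f := fun t : ℝ => t ^ 2 * Real.exp (-(b * t)))
  have e : ∀ x : ℝ, |x| ^ 2 * Real.exp (-(b * |x|)) = x ^ 2 * Real.exp (-(b * |x|)) := by
    intro x; rw [sq_abs]
  calc ∫ x : ℝ, x ^ 2 * Real.exp (-(b * |x|))
      = ∫ x : ℝ, |x| ^ 2 * Real.exp (-(b * |x|)) := by simp_rw [e]
    _ = 2 * ∫ x in Ioi (0:ℝ), x ^ 2 * Real.exp (-(b * x)) := h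
    _ = 4 / b ^ 3 := by rw [integral_Ioi_sq_mul_exp hb]; ring

/-- Antiderivative computation: `∫ x in Ioc 0 1, exp (-(a*x)) = (1 - exp (-a))/a`. -/
lemma integral_Ioc_exp_neg {a : ℝ} (ha : 0 < a) :
    ∫ x in Ioc (0:ℝ) 1, Real.exp (-(a * x)) = (1 - Real.exp (-a)) / a := by
  have hderiv : ∀ x ∈ uIcc (0:ℝ) 1,
      HasDerivAt (fun y : ℝ => -(Real.exp (-(a * y))) / a) (Real.exp (-(a * x))) x := by
    intro x _
    have h1 : HasDerivAt (fun y : ℝ => -(a * y)) (-a) x := by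
      simpa [Pi.neg_def] using ((hasDerivAt_id x).const_mul a).neg
    have h2 : HasDerivAt (fun y : ℝ => Real.exp (-(a * y)))
        (Real.exp (-(a * x)) * (-a)) x := (Real.hasDerivAt_exp _).comp x h1
    have h3 := (by simpa [Pi.neg_def] using h2.neg :
      HasDerivAt (fun y : ℝ => -(Real.exp (-(a * y)))) (-(Real.exp (-(a * x)) * (-a))) x).div_const a
    rwa [mul_neg, neg_neg, mul_div_assoc, div_self ha.ne', mul_one] at h3
  have hcont : ContinuousOn (fun x : ℝ => Real.exp (-(a * x))) (uIcc 0 1) := by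
    fun_prop
  have := intervalIntegral.integral_eq_sub_of_hasDerivAt hderiv
    (hcont.intervalIntegrable)
  rw [← intervalIntegral.integral_of_le zero_le_one, this]
  simp only [mul_one, mul_zero, neg_zero, Real.exp_zero]
  field_simp
  ring

set_option maxHeartbeats 1000000 in
/-- Rescaled posterior variance of the lasso Gibbs measure in the regime
`|z| < λ`: `lim_{u→∞} ∫ u x² q_u(x) dx = 0` where `q_u ∝ e^{-u F}` and
`F(x) = (z-x)²/(2λ) + |x|`. -/
theorem lasso_gibbs_variance_below_threshold (lam z : ℝ) (hlam : 0 < lam)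
    (hz : |z| < lam) :
    Tendsto (fun u : ℝ =>
        (∫ x : ℝ, u * x ^ 2 * Real.exp (-(u * ((z - x) ^ 2 / (2 * lam) + |x|)))) /
          (∫ x : ℝ, Real.exp (-(u * ((z - x) ^ 2 / (2 * lam) + |x|)))))
      atTop (nhds 0) := by
  set F : ℝ → ℝ := fun x => (z - x) ^ 2 / (2 * lam) + |x| with hF
  clear_value F
  set F0 : ℝ := z ^ 2 / (2 * lam) with hF0
  clear_value F0
  set c : ℝ := 1 - |z| / lam with hc
  clear_value c
  have hcpos : 0 < c := by rw [hc, sub_pos, div_lt_one hlam]; exact hz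
  set B : ℝ := 1 + |z| / lam + 1 / (2 * lam) with hB
  clear_value B
  have hBpos : 0 < B := by rw [hB]; positivity
  have hEB : 0 < 1 - Real.exp (-B) := by
    have : Real.exp (-B) < 1 := Real.exp_lt_one_iff.mpr (by linarith)
    linarith
  set K : ℝ := 4 * B / (c ^ 3 * (1 - Real.exp (-B))) with hK
  clear_value K
  have hlow : ∀ x : ℝ, F0 + c * |x| ≤ F x := by
    intro x
    have h1 : z * x ≤ |z| * |x| := (le_abs_self (z * x)).trans_eq (abs_mul z x)
    have h2 : (0:ℝ) < 2 * lam := by linarith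
    have heq : F x - (F0 + c * |x|) = (x ^ 2 - 2 * (z * x) + 2 * (|z| * |x|)) / (2 * lam) := by
      rw [hF, hF0, hc]; field_simp; ring
    have hnum : (0:ℝ) ≤ x ^ 2 - 2 * (z * x) + 2 * (|z| * |x|) := by nlinarith [sq_nonneg x]
    have := div_nonneg hnum h2.le
    linarith [heq ▸ this]
  have hup : ∀ x ∈ Ioc (0:ℝ) 1, F x ≤ F0 + B * x := by
    intro x hx
    obtain ⟨hx0, hx1⟩ := hx
    have habs : |x| = x := abs_of_pos hx0
    have h1 : -(z * x) ≤ |z| * x := by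
      have := (le_abs_self (-(z * x))).trans_eq (by rw [abs_neg, abs_mul, abs_of_pos hx0])
      linarith
    have h2 : x ^ 2 ≤ x := by nlinarith
    have h3 : (0:ℝ) < 2 * lam := by linarith
    have heq : F0 + B * x - F x = (2 * (z * x) + 2 * (|z| * x) + (x - x ^ 2)) / (2 * lam) := by
      simp only [hF, hF0, hB, habs]; field_simp; ring
    have hnum : (0:ℝ) ≤ 2 * (z * x) + 2 * (|z| * x) + (x - x ^ 2) := by nlinarith
    have := div_nonneg hnum h3.le
    linarith [heq ▸ this]
  have hFcont : Continuous F := by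
    rw [hF]; fun_prop
  -- eventual bound on the ratio
  have hbound : ∀ᶠ u in atTop, (∫ x : ℝ, u * x ^ 2 * Real.exp (-(u * F x))) /
      (∫ x : ℝ, Real.exp (-(u * F x))) ≤ K / u := by
    filter_upwards [eventually_ge_atTop (1:ℝ)] with u hu1
    have hu0 : (0:ℝ) < u := lt_of_lt_of_le one_pos hu1
    have hucb : 0 < u * c := mul_pos hu0 hcpos
    -- numerator upper bound
    have hint2 : Integrable (fun x : ℝ => x ^ 2 * Real.exp (-(u * c * |x|))) := by
      have := integrable_abs_pow_mul_exp 2 hucb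
      refine this.congr (Eventually.of_forall fun x => ?_)
      simp [sq_abs]
    have hNle : (∫ x : ℝ, u * x ^ 2 * Real.exp (-(u * F x)))
        ≤ ∫ x : ℝ, (u * Real.exp (-(u * F0))) * (x ^ 2 * Real.exp (-(u * c * |x|))) := by
      refine integral_mono_of_nonneg (Eventually.of_forall fun x =>
        mul_nonneg (mul_nonneg hu0.le (sq_nonneg x)) (Real.exp_pos _).le)
        ((hint2.const_mul _)) (Eventually.of_forall fun x => ?_)
      have hexp : Real.exp (-(u * F x)) ≤ Real.exp (-(u * (F0 + c * |x|))) := by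
        apply Real.exp_le_exp.mpr
        have := hlow x
        nlinarith
      have hsplit : Real.exp (-(u * (F0 + c * |x|)))
          = Real.exp (-(u * F0)) * Real.exp (-(u * c * |x|)) := by
        rw [← Real.exp_add]; ring_nf
      calc u * x ^ 2 * Real.exp (-(u * F x))
          ≤ u * x ^ 2 * Real.exp (-(u * (F0 + c * |x|))) := by
            apply mul_le_mul_of_nonneg_left hexp (by positivity)
        _ = (u * Real.exp (-(u * F0))) * (x ^ 2 * Real.exp (-(u * c * |x|))) := by
            rw [hsplit]; ring
    have hNval : ∫ x : ℝ, (u * Real.exp (-(u * F0))) * (x ^ 2 * Real.exp (-(u * c * |x|)))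
        = Real.exp (-(u * F0)) * (4 / (u ^ 2 * c ^ 3)) := by
      rw [integral_const_mul, integral_abs_sq_exp hucb]
      field_simp
    have hN : (∫ x : ℝ, u * x ^ 2 * Real.exp (-(u * F x)))
        ≤ Real.exp (-(u * F0)) * (4 / (u ^ 2 * c ^ 3)) := hNval ▸ hNle
    -- denominator lower bound
    have hDint : Integrable (fun x : ℝ => Real.exp (-(u * F x))) := by
      have hbig : Integrable (fun x : ℝ => Real.exp (-(u * F0)) * Real.exp (-(u * c * |x|))) := by
        have := integrable_abs_pow_mul_exp 0 hucb
        simp only [pow_zero, one_mul] at this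
        exact this.const_mul _
      refine hbig.mono' ?_ (Eventually.of_forall fun x => ?_)
      · exact (Real.continuous_exp.comp ((continuous_const.mul hFcont).neg)).aestronglyMeasurable
      · rw [Real.norm_eq_abs, abs_of_pos (Real.exp_pos _), ← Real.exp_add]
        apply Real.exp_le_exp.mpr
        have := hlow x
        nlinarith
    have hDnn : ∀ x : ℝ, 0 ≤ Real.exp (-(u * F x)) := fun x => (Real.exp_pos _).le
    have hstep1 : (∫ x in Ioc (0:ℝ) 1, Real.exp (-(u * F x)))
        ≤ ∫ x : ℝ, Real.exp (-(u * F x)) :=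
      setIntegral_le_integral hDint (Eventually.of_forall hDnn)
    have hstep2 : (∫ x in Ioc (0:ℝ) 1, Real.exp (-(u * (F0 + B * x))))
        ≤ ∫ x in Ioc (0:ℝ) 1, Real.exp (-(u * F x)) := by
      refine setIntegral_mono_on ?_ ?_ measurableSet_Ioc (fun x hx => ?_)
      · apply Continuous.integrableOn_Ioc; fun_prop
      · exact hDint.integrableOn
      · exact Real.exp_le_exp.mpr (by nlinarith [hup x hx])
    have hstep3 : (∫ x in Ioc (0:ℝ) 1, Real.exp (-(u * (F0 + B * x))))
        = Real.exp (-(u * F0)) * ((1 - Real.exp (-(u * B))) / (u * B)) := by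
      have : ∀ x : ℝ, Real.exp (-(u * (F0 + B * x)))
          = Real.exp (-(u * F0)) * Real.exp (-(u * B * x)) := by
        intro x; rw [← Real.exp_add]; ring_nf
      simp_rw [this]
      rw [integral_const_mul, integral_Ioc_exp_neg (mul_pos hu0 hBpos)]
    have hmon : Real.exp (-(u * B)) ≤ Real.exp (-B) := by
      apply Real.exp_le_exp.mpr; nlinarith
    have hDlow : Real.exp (-(u * F0)) * ((1 - Real.exp (-B)) / (u * B))
        ≤ ∫ x : ℝ, Real.exp (-(u * F x)) := by
      refine le_trans ?_ (le_trans hstep2 hstep1)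
      rw [hstep3]
      exact mul_le_mul_of_nonneg_left
        ((div_le_div_iff_of_pos_right (mul_pos hu0 hBpos)).mpr (by linarith)) (Real.exp_pos _).le
    have hDlowpos : 0 < Real.exp (-(u * F0)) * ((1 - Real.exp (-B)) / (u * B)) := by positivity
    calc (∫ x : ℝ, u * x ^ 2 * Real.exp (-(u * F x))) / (∫ x : ℝ, Real.exp (-(u * F x)))
        ≤ (Real.exp (-(u * F0)) * (4 / (u ^ 2 * c ^ 3))) /
            (Real.exp (-(u * F0)) * ((1 - Real.exp (-B)) / (u * B))) :=
          div_le_div₀ (by positivity) hN hDlowpos hDlow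
      _ = K / u := by
          rw [hK]
          rw [div_eq_div_iff (by positivity) hu0.ne']
          field_simp
  have h0 : ∀ᶠ u in atTop, 0 ≤ (∫ x : ℝ, u * x ^ 2 * Real.exp (-(u * F x))) /
      (∫ x : ℝ, Real.exp (-(u * F x))) := by
    filter_upwards [eventually_ge_atTop (0:ℝ)] with u hu
    exact div_nonneg
      (integral_nonneg fun x => mul_nonneg (mul_nonneg hu (sq_nonneg x)) (Real.exp_pos _).le)
      (integral_nonneg fun x => (Real.exp_pos _).le)
  have hKto : Tendsto (fun u : ℝ => K / u) atTop (nhds 0) := by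
    simpa using tendsto_const_nhds.div_atTop (tendsto_id (α := ℝ))
  have main : Tendsto (fun u : ℝ => (∫ x : ℝ, u * x ^ 2 * Real.exp (-(u * F x))) /
      (∫ x : ℝ, Real.exp (-(u * F x)))) atTop (nhds 0) :=
    tendsto_of_tendsto_of_tendsto_of_le_of_le' tendsto_const_nhds hKto h0 hbound
  have hfun : (fun u : ℝ =>
      (∫ x : ℝ, u * x ^ 2 * Real.exp (-(u * ((z - x) ^ 2 / (2 * lam) + |x|)))) /
        (∫ x : ℝ, Real.exp (-(u * ((z - x) ^ 2 / (2 * lam) + |x|)))))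
      = fun u : ℝ => (∫ x : ℝ, u * x ^ 2 * Real.exp (-(u * F x))) /
        (∫ x : ℝ, Real.exp (-(u * F x))) := by
    simp only [hF]
  rw [hfun]
  exact main
end
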